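/- For every finite connected simple graph G with at least one edge, there exists a maximum matching M of G such that the subgraph of G induced by the M-saturated vertices is connected. (Equivalently, the maximum size of a connected matching of G equals the maximum size of a matching of G.) -/

import Mathlib

open SimpleGraph

/-- `M` is a matching of `G`, viewed as a set of edges: every element of `M` is an
edge of `G`, and no two distinct edges of `M` share an endpoint. -/
def MatchingEdges {V : Type*} (G : SimpleGraph V) (M : Set (Sym2 V)) : Prop :=
  M ⊆ G.edgeSet ∧ ∀ e ∈ M, ∀ f ∈ M, e ≠ f → ∀ v : V, v ∈ e → v ∉ f

/-- The set of `M`-saturated vertices, i.e. endpoints of edges of `M`. -/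
def msat {V : Type*} (M : Set (Sym2 V)) : Set V := {v | ∃ e ∈ M, v ∈ e}

/-- `T` is connected within `T`: any two vertices of `T` are joined by a walk
staying inside `T`. -/
def ConnIn {V : Type*} (G : SimpleGraph V) (T : Set V) : Prop :=
  ∀ x ∈ T, ∀ y ∈ T, ∃ p : G.Walk x y, ∀ z ∈ p.support, z ∈ T

lemma induce_reachable_of_walk {V : Type*} {G : SimpleGraph V} {S : Set V} {x y : V}
    (p : G.Walk x y) :
    (∀ z ∈ p.support, z ∈ S) → ∀ (hx : x ∈ S) (hy : y ∈ S),
      (G.induce S).Reachable ⟨x, hx⟩ ⟨y, hy⟩ := by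
  induction p with
  | nil => intro _ hx hy; exact Reachable.refl _
  | @cons a b c h q ih =>
    intro hp hx hy
    have hb : b ∈ S := hp b (by simp)
    have h1 : (G.induce S).Adj ⟨a, hx⟩ ⟨b, hb⟩ := by simpa using h
    exact (h1.reachable).trans (ih (fun z hz => hp z (by simp [hz])) hb hy)

/-- The size of the largest "connected within" subset of saturated vertices. -/
noncomputable def phiCM {V : Type*} [Fintype V] (G : SimpleGraph V) (M : Set (Sym2 V)) : ℕ :=
  sSup {n | ∃ T : Set V, T ⊆ msat M ∧ ConnIn G T ∧ T.ncard = n}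

lemma phiCM_set_mem_zero {V : Type*} [Fintype V] (G : SimpleGraph V) (M : Set (Sym2 V)) :
    0 ∈ {n | ∃ T : Set V, T ⊆ msat M ∧ ConnIn G T ∧ T.ncard = n} :=
  ⟨∅, Set.empty_subset _, fun x hx => absurd hx (Set.notMem_empty x), Set.ncard_empty _⟩

lemma phiCM_set_bdd {V : Type*} [Fintype V] (G : SimpleGraph V) (M : Set (Sym2 V)) :
    ∀ n ∈ {n | ∃ T : Set V, T ⊆ msat M ∧ ConnIn G T ∧ T.ncard = n}, n ≤ Fintype.card V := by
  rintro n ⟨T, -, -, rfl⟩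
  calc T.ncard ≤ (Set.univ : Set V).ncard := Set.ncard_le_ncard (Set.subset_univ T) Set.finite_univ
    _ = Fintype.card V := by rw [Set.ncard_univ, Nat.card_eq_fintype_card]

lemma phiCM_le_card {V : Type*} [Fintype V] (G : SimpleGraph V) (M : Set (Sym2 V)) :
    phiCM G M ≤ Fintype.card V :=
  csSup_le ⟨0, phiCM_set_mem_zero G M⟩ (phiCM_set_bdd G M)

lemma phiCM_mem {V : Type*} [Fintype V] (G : SimpleGraph V) (M : Set (Sym2 V)) :
    ∃ T : Set V, T ⊆ msat M ∧ ConnIn G T ∧ T.ncard = phiCM G M := by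
  have hfin : {n | ∃ T : Set V, T ⊆ msat M ∧ ConnIn G T ∧ T.ncard = n}.Finite :=
    Set.Finite.subset (Set.finite_Iic (Fintype.card V)) (fun n hn => phiCM_set_bdd G M n hn)
  exact Set.Nonempty.csSup_mem ⟨0, phiCM_set_mem_zero G M⟩ hfin

lemma le_phiCM {V : Type*} [Fintype V] (G : SimpleGraph V) (M : Set (Sym2 V))
    {T : Set V} (hT : T ⊆ msat M) (hc : ConnIn G T) : T.ncard ≤ phiCM G M :=
  le_csSup ⟨Fintype.card V, phiCM_set_bdd G M⟩ ⟨T, hT, hc, rfl⟩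

lemma exists_max_f {V : Type*} [Fintype V] (G : SimpleGraph V) :
    ∃ M : Set (Sym2 V), MatchingEdges G M ∧
      ∀ M' : Set (Sym2 V), MatchingEdges G M' →
        (Fintype.card V + 1) * M'.ncard + phiCM G M' ≤
          (Fintype.card V + 1) * M.ncard + phiCM G M := by
  classical
  set N := Fintype.card V
  set F := {m | ∃ M : Set (Sym2 V), MatchingEdges G M ∧
      (N + 1) * M.ncard + phiCM G M = m} with hF
  have hbdd : ∀ m ∈ F, m ≤ (N + 1) * Nat.card (Sym2 V) + N := by
    rintro m ⟨M, hM, rfl⟩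
    have h1 : M.ncard ≤ Nat.card (Sym2 V) := by
      calc M.ncard ≤ (Set.univ : Set (Sym2 V)).ncard :=
            Set.ncard_le_ncard (Set.subset_univ M) Set.finite_univ
        _ = Nat.card (Sym2 V) := Set.ncard_univ _
    exact Nat.add_le_add (Nat.mul_le_mul_left _ h1) (phiCM_le_card G M)
  have hne : F.Nonempty := by
    refine ⟨(N + 1) * (∅ : Set (Sym2 V)).ncard + phiCM G ∅, ∅, ⟨Set.empty_subset _, ?_⟩, rfl⟩
    intro e he; exact absurd he (Set.notMem_empty e)
  have hfin : F.Finite :=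
    Set.Finite.subset (Set.finite_Iic _) (fun m hm => hbdd m hm)
  obtain ⟨M, hM, hEq⟩ := Set.Nonempty.csSup_mem hne hfin
  refine ⟨M, hM, fun M' hM' => ?_⟩
  rw [hEq]
  exact le_csSup ⟨_, hbdd⟩ ⟨M', hM', rfl⟩

/-- For every finite connected simple graph with at least one edge, there exists a
maximum matching `M` such that the subgraph induced by the `M`-saturated vertices
is connected. -/
theorem exists_maximum_connected_matching {V : Type*} [Fintype V] (G : SimpleGraph V)
    (hconn : G.Connected) (hedge : G.edgeSet.Nonempty) :
    ∃ M : Set (Sym2 V), MatchingEdges G M ∧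
      (∀ M' : Set (Sym2 V), MatchingEdges G M' → M'.ncard ≤ M.ncard) ∧
      (G.induce (msat M)).Connected := by
  classical
  obtain ⟨M, hM, hmax⟩ := exists_max_f G
  set N := Fintype.card V with hNdef
  -- M is a maximum matching
  have hMmax : ∀ M' : Set (Sym2 V), MatchingEdges G M' → M'.ncard ≤ M.ncard := by
    intro M' hM'
    by_contra hlt
    push_neg at hlt
    have h1 := hmax M' hM'
    have h2 : phiCM G M ≤ N := phiCM_le_card G M
    have h3 : (N + 1) * (M.ncard + 1) ≤ (N + 1) * M'.ncard := Nat.mul_le_mul_left _ hlt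
    rw [Nat.mul_add, Nat.mul_one] at h3
    omega
  -- M has at least one edge
  have hM1 : 1 ≤ M.ncard := by
    obtain ⟨e, he⟩ := hedge
    have : ({e} : Set (Sym2 V)).ncard ≤ M.ncard := by
      refine hMmax {e} ⟨by simpa using he, ?_⟩
      rintro a ha b hb hne
      rw [Set.mem_singleton_iff] at ha hb
      exact absurd (ha.trans hb.symm) hne
    simpa using this
  set S := msat M with hSdef
  -- S is nonempty
  obtain ⟨e₀, he₀⟩ : M.Nonempty := Set.nonempty_of_ncard_ne_zero (by omega)
  obtain ⟨x₀, hx₀e⟩ : ∃ x, x ∈ e₀ := ⟨e₀.out.1, Sym2.out_fst_mem e₀⟩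
  have hx₀S : x₀ ∈ S := ⟨e₀, he₀, hx₀e⟩
  -- the maximal connected-within subset T of S
  obtain ⟨T, hTS, hTconn, hTcard⟩ := phiCM_mem G M
  have hphi1 : 1 ≤ phiCM G M := by
    refine le_trans ?_ (le_phiCM G M (T := {x₀}) (by simpa using hx₀S) ?_)
    · simp
    · intro a ha b hb
      rw [Set.mem_singleton_iff] at ha hb; subst ha; subst hb
      exact ⟨SimpleGraph.Walk.nil, by simp⟩
  have hTne : T.Nonempty := Set.nonempty_of_ncard_ne_zero (by omega)
  obtain ⟨t₀, ht₀⟩ := hTne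
  -- K : the "component" of t₀ within S
  set K := {w | ∃ p : G.Walk t₀ w, ∀ z ∈ p.support, z ∈ S} with hKdef
  have hKS : K ⊆ S := by
    rintro w ⟨p, hp⟩
    exact hp w p.end_mem_support
  have ht₀S : t₀ ∈ S := hTS ht₀
  have ht₀K : t₀ ∈ K := ⟨SimpleGraph.Walk.nil, by simpa using ht₀S⟩
  have hTK : T ⊆ K := by
    intro t ht
    obtain ⟨p, hp⟩ := hTconn t₀ ht₀ t ht
    exact ⟨p, fun z hz => hTS (hp z hz)⟩
  have hKclosed : ∀ k ∈ K, ∀ s, s ∈ S → G.Adj k s → s ∈ K := by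
    rintro k ⟨p, hp⟩ s hsS hadj
    refine ⟨p.concat hadj, ?_⟩
    intro z hz
    rw [SimpleGraph.Walk.support_concat, List.mem_append] at hz
    rcases hz with hz | hz
    · exact hp z hz
    · simp at hz; subst hz; exact hsS
  -- supports of within-S walks from t₀ lie in K
  have hsupK : ∀ w, ∀ p : G.Walk t₀ w, (∀ z ∈ p.support, z ∈ S) →
      ∀ z ∈ p.support, z ∈ K := by
    intro w p hp z hz
    exact ⟨p.takeUntil z hz, fun a ha =>
      hp a (SimpleGraph.Walk.support_takeUntil_subset p hz ha)⟩
  have hKconn : ConnIn G K := by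
    rintro x ⟨px, hpx⟩ y ⟨py, hpy⟩
    refine ⟨px.reverse.append py, ?_⟩
    intro z hz
    rw [SimpleGraph.Walk.mem_support_append_iff] at hz
    rcases hz with hz | hz
    · rw [SimpleGraph.Walk.support_reverse, List.mem_reverse] at hz
      exact hsupK x px hpx z hz
    · exact hsupK y py hpy z hz
  -- main claim: K = S
  have hKeqS : K = S := by
    by_contra hne
    obtain ⟨s₀, hs₀S, hs₀K⟩ : ∃ s, s ∈ S ∧ s ∉ K := by
      by_contra h
      push_neg at h
      exact hne (Set.Subset.antisymm hKS h)
    -- minimal length walk from K to S \ K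
    set L := {n | ∃ k c : V, k ∈ K ∧ (c ∈ S ∧ c ∉ K) ∧ ∃ p : G.Walk k c, p.length = n} with hLdef
    have hLne : L.Nonempty := by
      obtain ⟨p⟩ := hconn.preconnected t₀ s₀
      exact ⟨p.length, t₀, s₀, ht₀K, ⟨hs₀S, hs₀K⟩, p, rfl⟩
    obtain ⟨k, c₀, hkK, hc₀, p, hplen⟩ := Nat.sInf_mem hLne
    have hmin : ∀ m ∈ L, sInf L ≤ m := fun m hm => Nat.sInf_le hm
    cases p with
    | nil => exact hc₀.2 hkK
    | cons h1 q =>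
      rename_i u
      rw [SimpleGraph.Walk.length_cons] at hplen
      have huK : u ∉ K := by
        intro huK
        have : sInf L ≤ q.length := hmin _ ⟨u, c₀, huK, hc₀, q, rfl⟩
        omega
      have huS : u ∉ S := fun huS => huK (hKclosed k hkK u huS h1)
      cases q with
      | nil => exact huS hc₀.1
      | cons h2 r =>
        rename_i c
        rw [SimpleGraph.Walk.length_cons] at hplen
        have hcK : c ∉ K := by
          intro hcK
          have : sInf L ≤ r.length := hmin _ ⟨c, c₀, hcK, hc₀, r, rfl⟩
          omega
        have hcS : c ∈ S := by
          by_contra hcS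
          -- u, c both unsaturated and adjacent: enlarge the matching
          have hnotM : s(u, c) ∉ M := by
            intro hmem
            exact huS ⟨s(u, c), hmem, by simp⟩
          have hM2 : MatchingEdges G (insert s(u, c) M) := by
            constructor
            · intro e he
              rcases Set.mem_insert_iff.mp he with rfl | he
              · exact h2
              · exact hM.1 he
            · intro e he f hf hnef v hv
              rcases Set.mem_insert_iff.mp he with he' | he'
              · rcases Set.mem_insert_iff.mp hf with hf' | hf'
                · exact absurd (he'.trans hf'.symm) hnef
                · rw [he'] at hv
                  intro hvf
                  rcases Sym2.mem_iff.mp hv with hv' | hv'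
                  · exact huS ⟨f, hf', hv' ▸ hvf⟩
                  · exact hcS ⟨f, hf', hv' ▸ hvf⟩
              · rcases Set.mem_insert_iff.mp hf with hf' | hf'
                · intro hvf
                  rw [hf'] at hvf
                  rcases Sym2.mem_iff.mp hvf with hv' | hv'
                  · exact huS ⟨e, he', hv' ▸ hv⟩
                  · exact hcS ⟨e, he', hv' ▸ hv⟩
                · exact hM.2 e he' f hf' hnef v hv
          have hcard : (insert s(u, c) M).ncard = M.ncard + 1 :=
            Set.ncard_insert_of_notMem hnotM M.toFinite
          have := hMmax _ hM2
          omega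
        -- c is matched; let c' be its partner
        have hcS2 := hcS
        obtain ⟨ec, hecM, hcec⟩ := hcS2
        obtain ⟨c', rfl⟩ := Sym2.mem_iff_exists.mp hcec
        have hAdjcc' : G.Adj c c' := hM.1 hecM
        have hc'S : c' ∈ S := ⟨s(c, c'), hecM, by simp⟩
        have hc'K : c' ∉ K := fun hc'K => hcK (hKclosed c' hc'K c hcS hAdjcc'.symm)
        -- the swap
        set M' := insert s(u, c) (M \ {s(c, c')}) with hM'def
        have hucM : s(u, c) ∉ M := fun hmem => huS ⟨s(u, c), hmem, by simp⟩
        have hM' : MatchingEdges G M' := by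
          constructor
          · intro e he
            rcases Set.mem_insert_iff.mp he with rfl | he
            · exact h2
            · exact hM.1 he.1
          · intro e he f hf hnef v hv
            rcases Set.mem_insert_iff.mp he with he' | he'
            · rcases Set.mem_insert_iff.mp hf with hf' | hf'
              · exact absurd (he'.trans hf'.symm) hnef
              · rw [he'] at hv
                intro hvf
                rcases Sym2.mem_iff.mp hv with hv' | hv'
                · exact huS ⟨f, hf'.1, hv' ▸ hvf⟩
                · exact hM.2 s(c, c') hecM f hf'.1
                    (fun h => hf'.2 (Set.mem_singleton_iff.mpr h.symm)) c (by simp) (hv' ▸ hvf)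
            · rcases Set.mem_insert_iff.mp hf with hf' | hf'
              · intro hvf
                rw [hf'] at hvf
                rcases Sym2.mem_iff.mp hvf with hv' | hv'
                · exact huS ⟨e, he'.1, hv' ▸ hv⟩
                · exact hM.2 s(c, c') hecM e he'.1
                    (fun h => he'.2 (Set.mem_singleton_iff.mpr h.symm)) c (by simp) (hv' ▸ hv)
              · exact hM.2 e he'.1 f hf'.1 hnef v hv
        have hM'card : M'.ncard = M.ncard := by
          have h1' : s(u, c) ∉ M \ {s(c, c')} := fun h => hucM h.1
          have h2' : (M \ {s(c, c')}).ncard = M.ncard - 1 :=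
            Set.ncard_diff_singleton_of_mem hecM
          rw [hM'def, Set.ncard_insert_of_notMem h1' (M.toFinite.diff), h2']
          omega
        -- K ∪ {u, c} is saturated by M' and connected within itself
        have hKsat : ∀ w ∈ K, w ∈ msat M' := by
          intro w hw
          obtain ⟨e, heM, hwe⟩ := hKS hw
          refine ⟨e, Set.mem_insert_of_mem _ ⟨heM, ?_⟩, hwe⟩
          intro hee
          rw [Set.mem_singleton_iff] at hee
          subst hee
          rcases Sym2.mem_iff.mp hwe with rfl | rfl
          · exact hcK hw
          · exact hc'K hw
        have huM' : u ∈ msat M' := ⟨s(u, c), Set.mem_insert _ _, by simp⟩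
        have hK'sub : insert u K ⊆ msat M' := by
          intro w hw
          rcases Set.mem_insert_iff.mp hw with rfl | hw
          · exact huM'
          · exact hKsat w hw
        have hK'conn : ConnIn G (insert u K) := by
          have hfromU : ∀ y ∈ insert u K, ∃ p : G.Walk u y, ∀ z ∈ p.support, z ∈ insert u K := by
            intro y hy
            rcases Set.mem_insert_iff.mp hy with rfl | hy
            · exact ⟨SimpleGraph.Walk.nil, by simp⟩
            · obtain ⟨pk, hpk⟩ := hKconn k hkK y hy
              refine ⟨SimpleGraph.Walk.cons h1.symm pk, ?_⟩
              intro z hz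
              rw [SimpleGraph.Walk.support_cons, List.mem_cons] at hz
              rcases hz with rfl | hz
              · exact Set.mem_insert _ _
              · exact Set.mem_insert_of_mem _ (hpk z hz)
          intro x hx y hy
          obtain ⟨px, hpx⟩ := hfromU x hx
          obtain ⟨py, hpy⟩ := hfromU y hy
          refine ⟨px.reverse.append py, ?_⟩
          intro z hz
          rw [SimpleGraph.Walk.mem_support_append_iff] at hz
          rcases hz with hz | hz
          · rw [SimpleGraph.Walk.support_reverse, List.mem_reverse] at hz
            exact hpx z hz
          · exact hpy z hz
        -- contradiction with maximality of phi
        have huK' : u ∉ K := huK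
        have hKcard : phiCM G M ≤ K.ncard := by
          rw [← hTcard]
          exact Set.ncard_le_ncard hTK K.toFinite
        have hK'card : (insert u K).ncard = K.ncard + 1 :=
          Set.ncard_insert_of_notMem huK' K.toFinite
        have hphiM' : K.ncard + 1 ≤ phiCM G M' := by
          rw [← hK'card]
          exact le_phiCM G M' hK'sub hK'conn
        have hle := hmax M' hM'
        rw [hM'card] at hle
        omega
  -- conclude: the induced graph on S is connected
  refine ⟨M, hM, hMmax, ?_⟩
  have hSconn : ConnIn G S := hKeqS ▸ hKconn
  rw [SimpleGraph.connected_iff]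
  constructor
  · rintro ⟨x, hx⟩ ⟨y, hy⟩
    obtain ⟨p, hp⟩ := hSconn x hx y hy
    exact induce_reachable_of_walk p hp hx hy
  · exact ⟨⟨x₀, hx₀S⟩⟩
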